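/- For every permutation π of [n], every sample size t ∈ {0,…,n}, and every fixed vector of bin choices R_{t+1},…,R_n ∈ {0,1,…,m}, the outputs x of InfeasibleGAP, y of FeasibleGAP, and z of ImitativeGAP satisfy v(y) + v(z) ≥ v(x). Moreover, y and z each satisfy all GAP feasibility constraints: Σ_j s_{i,j} y_{i,j} ≤ C_i and Σ_j s_{i,j} z_{i,j} ≤ C_i for all i ∈ [m], and each item is assigned to at most one bin. -/

import Mathlib

/-- The value `v(x) = Σ_i Σ_j v_{i,j} x_{i,j}` of an assignment. -/
def gapVal (m n : ℕ) (v : Fin m → Fin n → ℝ) (x : Fin m → Fin n → ℝ) : ℝ :=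
  ∑ i, ∑ j, v i j * x i j

/-- `x` is a feasible fractional assignment of the items in `Q`: all entries are
nonnegative, every bin respects its capacity, every item is assigned at most once,
and only items of `Q` are assigned. -/
def gapFeasibleOn (m n : ℕ) (C : Fin m → ℝ) (s : Fin m → Fin n → ℝ)
    (x : Fin m → Fin n → ℝ) (Q : Finset (Fin n)) : Prop :=
  (∀ i j, 0 ≤ x i j) ∧
  (∀ i, ∑ j, s i j * x i j ≤ C i) ∧
  (∀ j, ∑ i, x i j ≤ 1) ∧
  (∀ i j, j ∉ Q → x i j = 0)

/-- `x` is an integral (0/1) assignment. -/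
def gapIntegral (m n : ℕ) (x : Fin m → Fin n → ℝ) : Prop :=
  ∀ i j, x i j = 0 ∨ x i j = 1
/-- `Qset π ℓ` is the set of items revealed in the first `ℓ` rounds
(rounds are 0-indexed `0,…,n−1`). -/
def QsetG (n : ℕ) (π : Equiv.Perm (Fin n)) (ℓ : ℕ) : Finset (Fin n) :=
  (Finset.univ.filter (fun k : Fin n => (k : ℕ) < ℓ)).image π

/-- Algorithm `InfeasibleGAP`: `infAlg … ℓ` is the assignment after the first `ℓ`
rounds. Nothing is assigned during the sample rounds (0-indexed rounds `< t`); in a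
later round `ℓ`, if the bin choice is `R ℓ = some i` and the total size assigned to
bin `i` so far is at most `C i`, item `π ℓ` is assigned to bin `i` (so each bin's
capacity may be exceeded by at most one item). -/
noncomputable def infAlg (m n : ℕ) (C : Fin m → ℝ) (s : Fin m → Fin n → ℝ)
    (t : ℕ) (π : Equiv.Perm (Fin n)) (R : Fin n → Option (Fin m)) :
    ℕ → Fin m → Fin n → ℝ
  | 0 => fun _ _ => 0
  | (ℓ + 1) =>
      let X := infAlg m n C s t π R ℓ
      if h : t ≤ ℓ ∧ ℓ < n then
        (R ⟨ℓ, h.2⟩).elim X (fun i =>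
          if ∑ j, s i j * X i j ≤ C i then
            (fun i' j' => if i' = i ∧ j' = π ⟨ℓ, h.2⟩ then 1 else X i' j')
          else X)
      else X

/-- Algorithms `FeasibleGAP` and `ImitativeGAP`, run together: `fzAlg … ℓ = (y, z)`
after the first `ℓ` rounds. `FeasibleGAP` assigns item `π ℓ` to bin `i = R ℓ` only if
the capacity is respected *after* the assignment; `ImitativeGAP` maintains the same
imitative assignment `y` and assigns to each bin `i` only the first item whose
tentative assignment to `i` would violate the capacity in `y`. -/
noncomputable def fzAlg (m n : ℕ) (C : Fin m → ℝ) (s : Fin m → Fin n → ℝ)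
    (t : ℕ) (π : Equiv.Perm (Fin n)) (R : Fin n → Option (Fin m)) :
    ℕ → ((Fin m → Fin n → ℝ) × (Fin m → Fin n → ℝ))
  | 0 => (fun _ _ => 0, fun _ _ => 0)
  | (ℓ + 1) =>
      let YZ := fzAlg m n C s t π R ℓ
      if h : t ≤ ℓ ∧ ℓ < n then
        (R ⟨ℓ, h.2⟩).elim YZ (fun i =>
          if s i (π ⟨ℓ, h.2⟩) + ∑ j, s i j * YZ.1 i j ≤ C i then
            ((fun i' j' => if i' = i ∧ j' = π ⟨ℓ, h.2⟩ then 1 else YZ.1 i' j'), YZ.2)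
          else if ∀ k ∈ Finset.univ.filter (fun k : Fin n => (k : ℕ) < ℓ),
              YZ.2 i (π k) = 0 then
            (YZ.1, (fun i' j' => if i' = i ∧ j' = π ⟨ℓ, h.2⟩ then 1 else YZ.2 i' j'))
          else YZ)
      else YZ

/-- The invariant maintained by the three algorithms after `ℓ` rounds. -/
def GapInv (m n : ℕ) (C : Fin m → ℝ) (s : Fin m → Fin n → ℝ)
    (π : Equiv.Perm (Fin n)) (ℓ : ℕ)
    (X Y Z : Fin m → Fin n → ℝ) : Prop :=
  (∀ i j, X i j = 0 ∨ X i j = 1) ∧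
  (∀ i j, Y i j = 0 ∨ Y i j = 1) ∧
  (∀ i j, Z i j = 0 ∨ Z i j = 1) ∧
  (∀ i j, Y i j ≠ 0 → ∃ k : Fin n, (k : ℕ) < ℓ ∧ j = π k) ∧
  (∀ i j, Z i j ≠ 0 → ∃ k : Fin n, (k : ℕ) < ℓ ∧ j = π k) ∧
  (∀ i, ∑ j, s i j * Y i j ≤ C i) ∧
  (∀ j, ∑ i, Y i j ≤ 1) ∧
  (∀ j, ∑ i, Z i j ≤ 1) ∧
  (∀ i j j', Z i j ≠ 0 → Z i j' ≠ 0 → j = j') ∧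
  (∀ i, ((∀ j, X i j = Y i j) ∧ (∀ j, Z i j = 0)) ∨
        ((∀ j, X i j ≤ Y i j + Z i j) ∧ C i < ∑ j, s i j * X i j))

lemma sum_mul_update {n : ℕ} (w A : Fin n → ℝ) (a : Fin n) (ha : A a = 0) :
    ∑ j, w j * (if j = a then 1 else A j) = w a + ∑ j, w j * A j := by
  have h : ∀ j, w j * (if j = a then 1 else A j)
      = (if j = a then w j else 0) + w j * A j := by
    intro j; by_cases hj : j = a <;> simp [hj, ha]
  simp [h, Finset.sum_add_distrib]

lemma fresh_zero {m n ℓ : ℕ} {π : Equiv.Perm (Fin n)} (hℓ : ℓ < n)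
    {A : Fin m → Fin n → ℝ}
    (hsupp : ∀ i j, A i j ≠ 0 → ∃ k : Fin n, (k : ℕ) < ℓ ∧ j = π k)
    (i : Fin m) : A i (π ⟨ℓ, hℓ⟩) = 0 := by
  by_contra h
  obtain ⟨k, hk, heq⟩ := hsupp i _ h
  have := π.injective heq
  have : ℓ = (k : ℕ) := congrArg Fin.val this
  omega

section UpdLemmas

lemma upd_01 {m n : ℕ} {A : Fin m → Fin n → ℝ} (i0 : Fin m) (a : Fin n)
    (h01 : ∀ i j, A i j = 0 ∨ A i j = 1) :
    ∀ i j, (if i = i0 ∧ j = a then (1:ℝ) else A i j) = 0 ∨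
      (if i = i0 ∧ j = a then (1:ℝ) else A i j) = 1 := by
  intro i j
  by_cases h : i = i0 ∧ j = a
  · right; simp [h]
  · simpa [h] using h01 i j

lemma upd_supp {m n ℓ : ℕ} {π : Equiv.Perm (Fin n)} (hℓ : ℓ < n)
    {A : Fin m → Fin n → ℝ} (i0 : Fin m)
    (hA : ∀ i j, A i j ≠ 0 → ∃ k : Fin n, (k : ℕ) < ℓ ∧ j = π k) :
    ∀ i j, (if i = i0 ∧ j = π ⟨ℓ, hℓ⟩ then (1:ℝ) else A i j) ≠ 0 →
      ∃ k : Fin n, (k : ℕ) < ℓ + 1 ∧ j = π k := by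
  intro i j hij
  by_cases h : i = i0 ∧ j = π ⟨ℓ, hℓ⟩
  · exact ⟨⟨ℓ, hℓ⟩, Nat.lt_succ_self ℓ, h.2⟩
  · rw [if_neg h] at hij
    obtain ⟨k, hk, he⟩ := hA i j hij
    exact ⟨k, Nat.lt_succ_of_lt hk, he⟩

lemma upd_rowsum {m n : ℕ} {A : Fin m → Fin n → ℝ} (i0 : Fin m) (a : Fin n)
    (hfresh : ∀ i, A i a = 0) (hr : ∀ j, ∑ i, A i j ≤ 1) :
    ∀ j, ∑ i, (if i = i0 ∧ j = a then (1:ℝ) else A i j) ≤ 1 := by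
  intro j
  by_cases hj : j = a
  · subst hj
    have h1 : ∀ i : Fin m, (if i = i0 ∧ j = j then (1:ℝ) else A i j)
        = if i = i0 then 1 else 0 := by
      intro i
      by_cases hi : i = i0 <;> simp [hi, hfresh i]
    have h2 : (∑ i : Fin m, if i = i0 ∧ j = j then (1:ℝ) else A i j)
        = ∑ i : Fin m, if i = i0 then (1:ℝ) else 0 :=
      Finset.sum_congr rfl (fun i _ => h1 i)
    rw [h2]; simp
  · have h1 : ∀ i : Fin m, (if i = i0 ∧ j = a then (1:ℝ) else A i j) = A i j := by
      intro i; simp [hj]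
    simp only [h1]; exact hr j

lemma upd_binsum_ne {m n : ℕ} (s : Fin m → Fin n → ℝ) {A : Fin m → Fin n → ℝ}
    {i0 i : Fin m} (a : Fin n) (hi : ¬ i = i0) :
    ∑ j, s i j * (if i = i0 ∧ j = a then (1:ℝ) else A i j) = ∑ j, s i j * A i j :=
  Finset.sum_congr rfl (fun j _ => by simp [hi])

lemma upd_binsum_eq {m n : ℕ} (s : Fin m → Fin n → ℝ) {A : Fin m → Fin n → ℝ}
    (i0 : Fin m) (a : Fin n) (ha : A i0 a = 0) :
    ∑ j, s i0 j * (if i0 = i0 ∧ j = a then (1:ℝ) else A i0 j)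
      = s i0 a + ∑ j, s i0 j * A i0 j := by
  have h := sum_mul_update (s i0) (A i0) a ha
  simpa using h

lemma upd_ge {m n : ℕ} {A : Fin m → Fin n → ℝ} (i0 : Fin m) (a : Fin n)
    (h01 : ∀ i j, A i j = 0 ∨ A i j = 1) :
    ∀ i j, A i j ≤ (if i = i0 ∧ j = a then (1:ℝ) else A i j) := by
  intro i j
  by_cases h : i = i0 ∧ j = a
  · rw [if_pos h]
    rcases h01 i j with h1 | h1 <;> rw [h1] <;> norm_num
  · rw [if_neg h]

lemma upd_zbin {m n : ℕ} {Z : Fin m → Fin n → ℝ} (i0 : Fin m) (a : Fin n)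
    (hrow : ∀ j, Z i0 j = 0) (hzb : ∀ i j j', Z i j ≠ 0 → Z i j' ≠ 0 → j = j') :
    ∀ i j j', (if i = i0 ∧ j = a then (1:ℝ) else Z i j) ≠ 0 →
      (if i = i0 ∧ j' = a then (1:ℝ) else Z i j') ≠ 0 → j = j' := by
  intro i j j' hj hj'
  by_cases hi : i = i0
  · subst hi
    have hja : j = a := by
      by_contra hja
      rw [if_neg (by simp [hja]), hrow] at hj
      exact hj rfl
    have hja' : j' = a := by
      by_contra hja'
      rw [if_neg (by simp [hja']), hrow] at hj'
      exact hj' rfl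
    rw [hja, hja']
  · rw [if_neg (by simp [hi])] at hj
    rw [if_neg (by simp [hi])] at hj'
    exact hzb i j j' hj hj'

lemma dich_transfer {m n : ℕ} (C : Fin m → ℝ) (s : Fin m → Fin n → ℝ)
    {X Y Z X' Y' Z' : Fin m → Fin n → ℝ} (i : Fin m)
    (hX : ∀ j, X' i j = X i j) (hY : ∀ j, Y' i j = Y i j) (hZ : ∀ j, Z' i j = Z i j)
    (h : ((∀ j, X i j = Y i j) ∧ (∀ j, Z i j = 0)) ∨
        ((∀ j, X i j ≤ Y i j + Z i j) ∧ C i < ∑ j, s i j * X i j)) :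
    ((∀ j, X' i j = Y' i j) ∧ (∀ j, Z' i j = 0)) ∨
        ((∀ j, X' i j ≤ Y' i j + Z' i j) ∧ C i < ∑ j, s i j * X' i j) := by
  have hsum : ∑ j, s i j * X' i j = ∑ j, s i j * X i j :=
    Finset.sum_congr rfl (fun j _ => by rw [hX j])
  rcases h with ⟨h1, h2⟩ | ⟨h1, h2⟩
  · exact Or.inl ⟨fun j => by rw [hX, hY, h1], fun j => by rw [hZ, h2]⟩
  · exact Or.inr ⟨fun j => by rw [hX, hY, hZ]; exact h1 j, by rw [hsum]; exact h2⟩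

end UpdLemmas

/-- The one-cell update used by all three algorithms. -/
def updF {m n : ℕ} (A : Fin m → Fin n → ℝ) (i0 : Fin m) (a : Fin n) :
    Fin m → Fin n → ℝ :=
  fun i' j' => if i' = i0 ∧ j' = a then 1 else A i' j'

lemma updF_apply {m n : ℕ} (A : Fin m → Fin n → ℝ) (i0 : Fin m) (a : Fin n)
    (i : Fin m) (j : Fin n) :
    updF A i0 a i j = if i = i0 ∧ j = a then 1 else A i j := rfl

lemma updF_binsum_eq {m n : ℕ} (s : Fin m → Fin n → ℝ) {A : Fin m → Fin n → ℝ}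
    (i0 : Fin m) (a : Fin n) (ha : A i0 a = 0) :
    ∑ j, s i0 j * updF A i0 a i0 j = s i0 a + ∑ j, s i0 j * A i0 j := by
  have h : ∀ j : Fin n, updF A i0 a i0 j = if j = a then 1 else A i0 j := by
    intro j; simp [updF]
  calc ∑ j, s i0 j * updF A i0 a i0 j
      = ∑ j, s i0 j * (if j = a then 1 else A i0 j) :=
        Finset.sum_congr rfl (fun j _ => by rw [h j])
    _ = _ := sum_mul_update _ _ a ha

lemma updF_binsum_ne {m n : ℕ} (s : Fin m → Fin n → ℝ) {A : Fin m → Fin n → ℝ}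
    {i0 i : Fin m} (a : Fin n) (hi : ¬ i = i0) :
    ∑ j, s i j * updF A i0 a i j = ∑ j, s i j * A i j :=
  Finset.sum_congr rfl (fun j _ => by simp [updF, hi])

lemma gapInv_step (m n : ℕ) (C : Fin m → ℝ) (hC : ∀ i, 0 < C i)
    (s : Fin m → Fin n → ℝ) (hs : ∀ i j, 0 < s i j ∧ s i j ≤ C i)
    (t : ℕ) (π : Equiv.Perm (Fin n)) (R : Fin n → Option (Fin m)) (ℓ : ℕ)
    (H : GapInv m n C s π ℓ (infAlg m n C s t π R ℓ)
      (fzAlg m n C s t π R ℓ).1 (fzAlg m n C s t π R ℓ).2) :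
    GapInv m n C s π (ℓ + 1) (infAlg m n C s t π R (ℓ + 1))
      (fzAlg m n C s t π R (ℓ + 1)).1 (fzAlg m n C s t π R (ℓ + 1)).2 := by
  simp only [infAlg, fzAlg]
  set X := infAlg m n C s t π R ℓ with hXdef
  set YZ := fzAlg m n C s t π R ℓ with hYZdef
  set Y := YZ.1 with hYdef
  set Z := YZ.2 with hZdef
  obtain ⟨hx01, hy01, hz01, hys, hzs, hyc, hyr, hzr, hzb, hd⟩ := H
  have hsupp' : ∀ {A : Fin m → Fin n → ℝ},
      (∀ i j, A i j ≠ 0 → ∃ k : Fin n, (k : ℕ) < ℓ ∧ j = π k) →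
      (∀ i j, A i j ≠ 0 → ∃ k : Fin n, (k : ℕ) < ℓ + 1 ∧ j = π k) :=
    fun hA i j hij => (hA i j hij).imp (fun k hk => ⟨Nat.lt_succ_of_lt hk.1, hk.2⟩)
  have unchanged : GapInv m n C s π (ℓ + 1) X Y Z :=
    ⟨hx01, hy01, hz01, hsupp' hys, hsupp' hzs, hyc, hyr, hzr, hzb, hd⟩
  by_cases h : t ≤ ℓ ∧ ℓ < n
  swap
  · simp only [dif_neg h]; exact unchanged
  simp only [dif_pos h]
  cases hR : R ⟨ℓ, h.2⟩ with
  | none => simp only [Option.elim]; exact unchanged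
  | some i0 =>
    simp only [Option.elim]
    have freshY : ∀ i, Y i (π ⟨ℓ, h.2⟩) = 0 := fresh_zero h.2 hys
    have freshZ : ∀ i, Z i (π ⟨ℓ, h.2⟩) = 0 := fresh_zero h.2 hzs
    have hspos := (hs i0 (π ⟨ℓ, h.2⟩)).1
    by_cases hfit : s i0 (π ⟨ℓ, h.2⟩) + ∑ j, s i0 j * Y i0 j ≤ C i0
    · -- FeasibleGAP assigns
      rw [if_pos hfit]
      have hycap' : ∀ i, ∑ j, s i j * updF Y i0 (π ⟨ℓ, h.2⟩) i j ≤ C i := by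
        intro i
        by_cases hi : i = i0
        · subst hi
          rw [updF_binsum_eq s i _ (freshY i)]
          exact hfit
        · rw [updF_binsum_ne s _ hi]; exact hyc i
      by_cases hxfit : ∑ j, s i0 j * X i0 j ≤ C i0
      · -- InfeasibleGAP also assigns (combo 1)
        rw [if_pos hxfit]
        show GapInv m n C s π (ℓ + 1) (updF X i0 (π ⟨ℓ, h.2⟩)) (updF Y i0 (π ⟨ℓ, h.2⟩)) Z
        refine ⟨upd_01 i0 _ hx01, upd_01 i0 _ hy01, hz01,
          upd_supp h.2 i0 hys, hsupp' hzs, hycap', upd_rowsum i0 _ freshY hyr, hzr, hzb, ?_⟩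
        intro i
        by_cases hi : i = i0
        · subst hi
          rcases hd i with ⟨he, hz0⟩ | ⟨_, hb⟩
          · left
            refine ⟨fun j => ?_, hz0⟩
            simp only [updF_apply]
            by_cases hj : j = π ⟨ℓ, h.2⟩ <;> simp [hj, he j]
          · exact absurd hxfit (not_le.mpr hb)
        · exact dich_transfer C s i (fun j => by simp [updF_apply, hi])
            (fun j => by simp [updF_apply, hi]) (fun j => rfl) (hd i)
      · -- InfeasibleGAP does not assign (combo 2)
        rw [if_neg hxfit]
        show GapInv m n C s π (ℓ + 1) X (updF Y i0 (π ⟨ℓ, h.2⟩)) Z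
        refine ⟨hx01, upd_01 i0 _ hy01, hz01, upd_supp h.2 i0 hys, hsupp' hzs, hycap',
          upd_rowsum i0 _ freshY hyr, hzr, hzb, ?_⟩
        intro i
        by_cases hi : i = i0
        · subst hi
          rcases hd i with ⟨he, _⟩ | ⟨hb, hcb⟩
          · exfalso
            apply hxfit
            have hsum : ∑ j, s i j * X i j = ∑ j, s i j * Y i j :=
              Finset.sum_congr rfl (fun j _ => by rw [he j])
            rw [hsum]
            linarith
          · refine Or.inr ⟨fun j => ?_, hcb⟩
            calc X i j ≤ Y i j + Z i j := hb j
              _ ≤ updF Y i (π ⟨ℓ, h.2⟩) i j + Z i j :=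
                  add_le_add_left (upd_ge i (π ⟨ℓ, h.2⟩) hy01 i j) _
        · exact dich_transfer C s i (fun j => rfl)
            (fun j => by simp [updF_apply, hi]) (fun j => rfl) (hd i)
    · -- FeasibleGAP does not assign
      rw [if_neg hfit]
      by_cases hzc : ∀ k ∈ Finset.univ.filter (fun k : Fin n => (k : ℕ) < ℓ),
          Z i0 (π k) = 0
      · -- ImitativeGAP assigns
        rw [if_pos hzc]
        have hz0row : ∀ j, Z i0 j = 0 := by
          intro j
          by_contra hj
          obtain ⟨k, hk, he⟩ := hzs i0 j hj
          have hzk := hzc k (Finset.mem_filter.mpr ⟨Finset.mem_univ k, hk⟩)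
          rw [← he] at hzk
          exact hj hzk
        by_cases hxfit : ∑ j, s i0 j * X i0 j ≤ C i0
        · -- InfeasibleGAP assigns (combo 3)
          rw [if_pos hxfit]
          show GapInv m n C s π (ℓ + 1) (updF X i0 (π ⟨ℓ, h.2⟩)) Y (updF Z i0 (π ⟨ℓ, h.2⟩))
          refine ⟨upd_01 i0 _ hx01, hy01, upd_01 i0 _ hz01, hsupp' hys,
            upd_supp h.2 i0 hzs, hyc, hyr, upd_rowsum i0 _ freshZ hzr,
            upd_zbin i0 _ hz0row hzb, ?_⟩
          intro i
          by_cases hi : i = i0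
          · subst hi
            rcases hd i with ⟨he, hz0⟩ | ⟨_, hb⟩
            · right
              constructor
              · intro j
                simp only [updF_apply]
                by_cases hj : j = π ⟨ℓ, h.2⟩
                · simp [hj, freshY i]
                · simp [hj, he j, hz0 j]
              · have freshX : X i (π ⟨ℓ, h.2⟩) = 0 := by rw [he]; exact freshY i
                rw [updF_binsum_eq s i _ freshX]
                have hsum : ∑ j, s i j * X i j = ∑ j, s i j * Y i j :=
                  Finset.sum_congr rfl (fun j _ => by rw [he j])
                rw [hsum]
                linarith [not_le.mp hfit]
            · exact absurd hxfit (not_le.mpr hb)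
          · exact dich_transfer C s i (fun j => by simp [updF_apply, hi]) (fun j => rfl)
              (fun j => by simp [updF_apply, hi]) (hd i)
        · -- InfeasibleGAP does not assign (combo 5)
          rw [if_neg hxfit]
          show GapInv m n C s π (ℓ + 1) X Y (updF Z i0 (π ⟨ℓ, h.2⟩))
          refine ⟨hx01, hy01, upd_01 i0 _ hz01, hsupp' hys,
            upd_supp h.2 i0 hzs, hyc, hyr, upd_rowsum i0 _ freshZ hzr,
            upd_zbin i0 _ hz0row hzb, ?_⟩
          intro i
          by_cases hi : i = i0
          · subst hi
            rcases hd i with ⟨he, _⟩ | ⟨hb, hcb⟩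
            · exfalso
              apply hxfit
              have hsum : ∑ j, s i j * X i j = ∑ j, s i j * Y i j :=
                Finset.sum_congr rfl (fun j _ => by rw [he j])
              rw [hsum]; exact hyc i
            · refine Or.inr ⟨fun j => ?_, hcb⟩
              calc X i j ≤ Y i j + Z i j := hb j
                _ ≤ Y i j + updF Z i (π ⟨ℓ, h.2⟩) i j :=
                    add_le_add_right (upd_ge i (π ⟨ℓ, h.2⟩) hz01 i j) _
          · exact dich_transfer C s i (fun j => rfl) (fun j => rfl)
              (fun j => by simp [updF_apply, hi]) (hd i)
      · -- combo 4/6: fzAlg unchanged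
        rw [if_neg hzc]
        by_cases hxfit : ∑ j, s i0 j * X i0 j ≤ C i0
        · -- combo 4: impossible
          exfalso
          rcases hd i0 with ⟨_, hz0⟩ | ⟨_, hb⟩
          · exact hzc (fun k _ => hz0 (π k))
          · exact absurd hxfit (not_le.mpr hb)
        · rw [if_neg hxfit]
          exact unchanged

lemma gapInv_all (m n : ℕ) (C : Fin m → ℝ) (hC : ∀ i, 0 < C i)
    (s : Fin m → Fin n → ℝ) (hs : ∀ i j, 0 < s i j ∧ s i j ≤ C i)
    (t : ℕ) (π : Equiv.Perm (Fin n)) (R : Fin n → Option (Fin m)) (ℓ : ℕ) :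
    GapInv m n C s π ℓ (infAlg m n C s t π R ℓ)
      (fzAlg m n C s t π R ℓ).1 (fzAlg m n C s t π R ℓ).2 := by
  induction ℓ with
  | zero =>
    simp only [infAlg, fzAlg]
    refine ⟨fun i j => Or.inl rfl, fun i j => Or.inl rfl, fun i j => Or.inl rfl,
      fun i j hij => absurd rfl hij, fun i j hij => absurd rfl hij,
      fun i => by simpa using (hC i).le, fun j => by simp, fun j => by simp,
      fun i j j' hj _ => absurd rfl hj,
      fun i => Or.inl ⟨fun j => rfl, fun j => rfl⟩⟩
  | succ ℓ ih => exact gapInv_step m n C hC s hs t π R ℓ ih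

/-- For every permutation `π`, sample size `t ∈ {0,…,n}`, and fixed
bin choices `R`, the outputs `x` of `InfeasibleGAP`, `y` of `FeasibleGAP` and `z` of
`ImitativeGAP` satisfy `v(y) + v(z) ≥ v(x)`; moreover `y` and `z` each satisfy all GAP
feasibility constraints (capacities and each item in at most one bin). -/
theorem gap_feasible_imitative_cover_infeasible
    (m n : ℕ) (C : Fin m → ℝ) (hC : ∀ i, 0 < C i)
    (s v : Fin m → Fin n → ℝ)
    (hs : ∀ i j, 0 < s i j ∧ s i j ≤ C i) (hv : ∀ i j, 0 < v i j)
    (π : Equiv.Perm (Fin n)) (t : ℕ) (ht : t ≤ n)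
    (R : Fin n → Option (Fin m)) :
    gapVal m n v ((fzAlg m n C s t π R n).1) + gapVal m n v ((fzAlg m n C s t π R n).2)
        ≥ gapVal m n v (infAlg m n C s t π R n) ∧
    (∀ i, ∑ j, s i j * (fzAlg m n C s t π R n).1 i j ≤ C i) ∧
    (∀ j, ∑ i, (fzAlg m n C s t π R n).1 i j ≤ 1) ∧
    (∀ i, ∑ j, s i j * (fzAlg m n C s t π R n).2 i j ≤ C i) ∧
    (∀ j, ∑ i, (fzAlg m n C s t π R n).2 i j ≤ 1) := by
  obtain ⟨hx01, hy01, hz01, hys, hzs, hyc, hyr, hzr, hzb, hd⟩ :=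
    gapInv_all m n C hC s hs t π R n
  set X := infAlg m n C s t π R n
  set Y := (fzAlg m n C s t π R n).1
  set Z := (fzAlg m n C s t π R n).2
  have hpt : ∀ i j, v i j * X i j ≤ v i j * Y i j + v i j * Z i j := by
    intro i j
    rcases hd i with ⟨he, hz0⟩ | ⟨hb, _⟩
    · rw [he j, hz0 j, mul_zero, add_zero]
    · have h2 : v i j * X i j ≤ v i j * (Y i j + Z i j) :=
        mul_le_mul_of_nonneg_left (hb j) (hv i j).le
      rw [mul_add] at h2; exact h2
  refine ⟨?_, hyc, hyr, ?_, hzr⟩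
  · show gapVal m n v Y + gapVal m n v Z ≥ gapVal m n v X
    unfold gapVal
    calc ∑ i, ∑ j, v i j * X i j
        ≤ ∑ i, ∑ j, (v i j * Y i j + v i j * Z i j) :=
          Finset.sum_le_sum (fun i _ => Finset.sum_le_sum (fun j _ => hpt i j))
      _ = (∑ i, ∑ j, v i j * Y i j) + ∑ i, ∑ j, v i j * Z i j := by
          rw [← Finset.sum_add_distrib]
          exact Finset.sum_congr rfl (fun i _ => Finset.sum_add_distrib)
  · intro i
    by_cases hz0 : ∀ j, Z i j = 0
    · have h0 : ∑ j, s i j * Z i j = 0 :=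
        Finset.sum_eq_zero (fun j _ => by rw [hz0 j, mul_zero])
      rw [h0]; exact (hC i).le
    · push_neg at hz0
      obtain ⟨j0, hj0⟩ := hz0
      have h1 : Z i j0 = 1 := (hz01 i j0).resolve_left hj0
      have hsum : ∑ j, s i j * Z i j = s i j0 * Z i j0 := by
        refine Finset.sum_eq_single j0 (fun j _ hne => ?_)
          (fun hmem => absurd (Finset.mem_univ j0) hmem)
        have hz : Z i j = 0 := by
          by_contra hzz
          exact hne (hzb i j j0 hzz hj0)
        rw [hz, mul_zero]
      rw [hsum, h1, mul_one]
      exact (hs i j0).2
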